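/- If additionally the mean shift lies entirely in the signal subspace, i.e. U Uᵀ μ = μ, and n > d, then for every α ∈ ℝ the penalty term of the self-supervised loss satisfies (2·α·d/(n − d)) · E[‖(Iₙ − U Uᵀ) y‖²] = 2·α·d·s². -/

import Mathlib

open MeasureTheory ProbabilityTheory Matrix

theorem stmt_11 (n d : ℕ) (hn : 0 < n) (hd : 0 < d) (hdn : d ≤ n)
    (U : Matrix (Fin n) (Fin d) ℝ) (hU : Uᵀ * U = 1)
    (μ : Fin n → ℝ) (s : ℝ)
    {Ω : Type*} [MeasureSpace Ω] [IsProbabilityMeasure (volume : Measure Ω)]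
    (c : Ω → Fin d → ℝ) (z : Ω → Fin n → ℝ)
    (hmc : Measurable c) (hmz : Measurable z)
    (hindep : IndepFun c z)
    (hc2 : ∀ i, MemLp (fun ω => c ω i) 2)
    (hz2 : ∀ i, MemLp (fun ω => z ω i) 2)
    (hcmean : ∀ i, ∫ ω, c ω i = 0)
    (hccov : ∀ i j, ∫ ω, c ω i * c ω j = if i = j then 1 else 0)
    (hzmean : ∀ i, ∫ ω, z ω i = 0)
    (hzcov : ∀ i j, ∫ ω, z ω i * z ω j = if i = j then s ^ 2 else 0)
    (y : Ω → Fin n → ℝ) (hy : ∀ ω, y ω = U.mulVec (c ω) + μ + z ω)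
    (hμ : (U * Uᵀ).mulVec μ = μ) (hnd : d < n) (α : ℝ) :
    2 * α * d / ((n : ℝ) - d) *
        ∫ ω, ∑ i, (((1 : Matrix (Fin n) (Fin n) ℝ) - U * Uᵀ).mulVec (y ω) i) ^ 2 =
      2 * α * d * s ^ 2 := by
  set P : Matrix (Fin n) (Fin n) ℝ := 1 - U * Uᵀ with hP
  have hPU : P * U = 0 := by
    simp [hP, Matrix.sub_mul, Matrix.mul_assoc, hU]
  have hPμ : P.mulVec μ = 0 := by
    simp [hP, Matrix.sub_mulVec, hμ]
  have hPy : ∀ ω, P.mulVec (y ω) = P.mulVec (z ω) := by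
    intro ω
    rw [hy, Matrix.mulVec_add, Matrix.mulVec_add, Matrix.mulVec_mulVec, hPU, hPμ]
    simp
  have hint : ∀ j k : Fin n, Integrable (fun ω => z ω j * z ω k) := by
    intro j k
    have h := L2.integrable_inner (𝕜 := ℝ) ((hz2 j).toLp _) ((hz2 k).toLp _)
    refine h.congr ?_
    filter_upwards [(hz2 j).coeFn_toLp, (hz2 k).coeFn_toLp] with ω h1 h2
    simp [h1, h2, RCLike.inner_apply, mul_comm]
  have expand : ∀ ω, (∑ i, (P.mulVec (y ω) i) ^ 2)
      = ∑ i, ∑ j, ∑ k, P i j * P i k * (z ω j * z ω k) := by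
    intro ω
    rw [hPy]
    refine Finset.sum_congr rfl fun i _ => ?_
    rw [show P.mulVec (z ω) i = ∑ j, P i j * z ω j from rfl, sq, Finset.sum_mul_sum]
    exact Finset.sum_congr rfl fun j _ => Finset.sum_congr rfl fun k _ => by ring
  have key : ∫ ω, ∑ i, (P.mulVec (y ω) i) ^ 2 = s ^ 2 * ((n : ℝ) - d) := by
    simp only [expand]
    rw [integral_finset_sum _ (fun i _ => integrable_finset_sum _ fun j _ =>
      integrable_finset_sum _ fun k _ => (hint j k).const_mul _)]
    have : ∀ i : Fin n, ∫ ω, ∑ j, ∑ k, P i j * P i k * (z ω j * z ω k)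
        = ∑ j, P i j * P i j * s ^ 2 := by
      intro i
      rw [integral_finset_sum _ (fun j _ => integrable_finset_sum _ fun k _ =>
        (hint j k).const_mul _)]
      refine Finset.sum_congr rfl fun j _ => ?_
      rw [integral_finset_sum _ (fun k _ => (hint j k).const_mul _)]
      have : ∀ k : Fin n, ∫ ω, P i j * P i k * (z ω j * z ω k)
          = P i j * P i k * if j = k then s ^ 2 else 0 := fun k => by
        rw [integral_const_mul, hzcov]
      simp only [this, mul_ite, mul_zero]
      simp
    simp only [this]
    have htr : ∑ i : Fin n, ∑ j : Fin n, P i j * P i j = (n : ℝ) - d := by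
      have hPsymm : Pᵀ = P := by
        simp [hP, Matrix.transpose_sub, Matrix.transpose_mul]
      have hPP : P * P = P := by
        have hA : (U * Uᵀ) * (U * Uᵀ) = U * Uᵀ := by
          rw [Matrix.mul_assoc, ← Matrix.mul_assoc Uᵀ, hU, Matrix.one_mul]
        simp [hP, Matrix.sub_mul, Matrix.mul_sub, hA]
      have h1 : ∑ i : Fin n, ∑ j : Fin n, P i j * P i j = (P * Pᵀ).trace := by
        simp [Matrix.trace, Matrix.mul_apply, Matrix.diag]
      rw [h1, hPsymm, hPP, hP, Matrix.trace_sub, Matrix.trace_one,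
        Matrix.trace_mul_comm, hU, Matrix.trace_one]
      simp
    calc ∑ i : Fin n, ∑ j : Fin n, P i j * P i j * s ^ 2
        = (∑ i : Fin n, ∑ j : Fin n, P i j * P i j) * s ^ 2 := by
          rw [Finset.sum_mul]; exact Finset.sum_congr rfl fun i _ => (Finset.sum_mul _ _ _).symm
      _ = s ^ 2 * ((n : ℝ) - d) := by rw [htr, mul_comm]
  rw [key]
  have hne : (n : ℝ) - d ≠ 0 := by
    have : (d : ℝ) < n := by exact_mod_cast hnd
    linarith
  field_simp
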